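/- arXiv:2009.13713 — 2 statements merged into one kernel-verified Lean document; each statement's English description precedes it below -/
import Mathlib

section
/- Let X be a metric space with a finite Borel measure μ, f : X → X bijective, and B a measurable set containing no recurrent points of f with 0 < μ(B) < ∞. Then for every ε > 0 there exists a measurable set K ⊆ B and a finite number r ∈ ℕ such that μ(B ∖ K) < ε, K is a finite union of r sets each of which is a wandering set for f, and consequently ∑_{n∈ℤ} μ(fⁿ(K)) ≤ r·μ(X) < ∞. -/
open MeasureTheory Set Filter
open scoped ENNReal NNReal

/-- The image of a set under the `n`-th power (`n ∈ ℤ`) of a bijection `f`. -/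
def zimg {X : Type*} (f : X → X) (n : ℤ) (B : Set X) : Set X :=
  if 0 ≤ n then f^[n.toNat] '' B else f^[(-n).toNat] ⁻¹' B

/-- `W` is a wandering set for `f`: the sets `fⁿ(W)`, `n ∈ ℤ`, are pairwise disjoint. -/
def Wandering {X : Type*} (f : X → X) (W : Set X) : Prop :=
  Pairwise fun m n : ℤ => Disjoint (zimg f m W) (zimg f n W)

/-- `W` generates `X`: `X = ⋃_{n ∈ ℤ} fⁿ(W)`. -/
def GeneratedBy {X : Type*} (f : X → X) (W : Set X) : Prop :=
  (⋃ n : ℤ, zimg f n W) = Set.univ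

/-- The Summability Condition (SC). -/
def SCcond {X : Type*} [MeasurableSpace X] (μ : Measure X) (f : X → X) : Prop :=
  ∀ ε : ℝ≥0∞, 0 < ε → ∀ B : Set X, MeasurableSet B → μ B < ⊤ →
    ∃ B' : Set X, B' ⊆ B ∧ MeasurableSet B' ∧ μ (B \ B') < ε ∧
      ∑' n : ℤ, μ (zimg f n B') ≠ ⊤

/-- A measurable system: `μ` σ-finite with `μ(X) > 0`, `f` bijective, bimeasurable,
nonsingular, and `μ(f⁻¹(B)) ≤ c·μ(B)` with `0 < c < ∞`. -/
def MeasSystem {X : Type*} [MeasurableSpace X] (μ : Measure X) (f : X → X) (c : ℝ≥0∞) : Prop :=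
  SigmaFinite μ ∧ 0 < μ Set.univ ∧ Function.Bijective f ∧ Measurable f ∧
  (∀ B : Set X, MeasurableSet B → MeasurableSet (f '' B)) ∧
  (∀ B : Set X, MeasurableSet B → (μ (f ⁻¹' B) = 0 ↔ μ B = 0)) ∧
  0 < c ∧ c ≠ ⊤ ∧ (∀ B : Set X, MeasurableSet B → μ (f ⁻¹' B) ≤ c * μ B)

/-- `f` is dissipative: there is a generating wandering set. -/
def Dissipative {X : Type*} [MeasurableSpace X] (f : X → X) : Prop :=
  ∃ W : Set X, MeasurableSet W ∧ Wandering f W ∧ GeneratedBy f W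

/-- A set of natural numbers has positive lower density. -/
def PosLowerDensity (A : Set ℕ) : Prop :=
  0 < Filter.liminf (fun N : ℕ => ((A ∩ Set.Icc 1 N).ncard : ℝ) / N) Filter.atTop

/-- `x` is a recurrent point of `f`. -/
def Recurrent {X : Type*} [TopologicalSpace X] (f : X → X) (x : X) : Prop :=
  ∀ U : Set X, IsOpen U → x ∈ U → ∃ n : ℕ, 1 ≤ n ∧ f^[n] x ∈ U

/-- A continuous linear operator is frequently hypercyclic. -/
def FreqHC {E : Type*} [NormedAddCommGroup E] [NormedSpace ℝ E] (T : E →L[ℝ] E) : Prop :=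
  ∃ φ : E, ∀ U : Set E, IsOpen U → U.Nonempty → PosLowerDensity {n : ℕ | (T ^ n) φ ∈ U}

/-- `d(W) = ‖dμ/dν |_W‖_∞⁻¹`, with the convention `1/∞ = 0`. -/
noncomputable def dSeq {X : Type*} [MeasurableSpace X] (μ ν : Measure X) (W : Set X) : ℝ≥0∞ :=
  (essSup (μ.rnDeriv ν) (μ.restrict W))⁻¹

section Helpers

variable {X : Type*}

lemma perm_zpow_coe (f : X → X) (hbij : Function.Bijective f) (k : ℕ) :
    ⇑((Equiv.ofBijective f hbij) ^ (k : ℤ)) = f^[k] := by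
  rw [zpow_natCast]
  induction k with
  | zero => simp
  | succ k ih =>
    rw [pow_succ, Function.iterate_succ]
    funext x
    have h0 : (Equiv.ofBijective f hbij) x = f x := rfl
    simp only [Equiv.Perm.mul_apply, Function.comp_apply, ih, h0]

lemma zimg_eq_perm (f : X → X) (hbij : Function.Bijective f) (n : ℤ) (V : Set X) :
    zimg f n V = ⇑((Equiv.ofBijective f hbij) ^ n) '' V := by
  set e := Equiv.ofBijective f hbij with he
  rcases le_or_gt 0 n with h | h
  · rw [zimg, if_pos h]
    conv_rhs => rw [show n = ((n.toNat : ℕ) : ℤ) by omega]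
    rw [perm_zpow_coe f hbij]
  · rw [zimg, if_neg (not_le.mpr h)]
    conv_rhs => rw [show n = -(((-n).toNat : ℕ) : ℤ) by omega]
    rw [zpow_neg]
    have h1 : (e ^ (((-n).toNat : ℕ) : ℤ))⁻¹ = (e ^ (((-n).toNat : ℕ) : ℤ)).symm := rfl
    rw [h1, Equiv.image_eq_preimage_symm, Equiv.symm_symm, perm_zpow_coe f hbij]

lemma wandering_of_dist {Y : Type*} [MetricSpace Y] {f : Y → Y} (hbij : Function.Bijective f)
    {δ : ℝ} {V : Set Y}
    (hA : ∀ x ∈ V, ∀ k : ℕ, 1 ≤ k → δ ≤ dist (f^[k] x) x)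
    (hdiam : ∀ y ∈ V, ∀ z ∈ V, dist y z < δ) : Wandering f V := by
  set e := Equiv.ofBijective f hbij with he
  have key : ∀ m n : ℤ, m < n → Disjoint (zimg f m V) (zimg f n V) := by
    intro m n hmn
    rw [zimg_eq_perm f hbij, zimg_eq_perm f hbij, Set.disjoint_left]
    rintro a ⟨y, hy, hey⟩ ⟨z, hz, hez⟩
    have h1 : (e ^ m) ((e ^ ((n - m).toNat : ℤ)) z) = (e ^ m) y := by
      rw [← Equiv.Perm.mul_apply, ← zpow_add, show m + ((n - m).toNat : ℤ) = n by omega,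
        hey, hez]
    have h2 : (e ^ ((n - m).toNat : ℤ)) z = y := (e ^ m).injective h1
    rw [perm_zpow_coe f hbij] at h2
    have h3 := hA z hz (n - m).toNat (by omega)
    rw [h2] at h3
    exact absurd (hdiam y hy z hz) (not_lt.mpr h3)
  intro m n hmn
  rcases lt_or_gt_of_ne hmn with h | h
  · exact key m n h
  · exact (key n m h).symm

lemma zimg_measurable [MeasurableSpace X] {f : X → X} (hmeas : Measurable f)
    (himg : ∀ B : Set X, MeasurableSet B → MeasurableSet (f '' B))
    (n : ℤ) {V : Set X} (hV : MeasurableSet V) : MeasurableSet (zimg f n V) := by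
  rw [zimg]
  split
  · induction (n.toNat) with
    | zero => simpa using hV
    | succ k ih =>
      rw [Function.iterate_succ', Set.image_comp] at *
      exact himg _ ih
  · exact (hmeas.iterate _) hV

lemma zimg_iUnion {ι : Sort*} (f : X → X) (n : ℤ) (V : ι → Set X) :
    zimg f n (⋃ i, V i) = ⋃ i, zimg f n (V i) := by
  rcases le_or_gt 0 n with h | h
  · simp only [zimg, if_pos h, Set.image_iUnion]
  · simp only [zimg, if_neg (not_le.mpr h), Set.preimage_iUnion]

end Helpers

/-- If `B` is a measurable set of finite positive measure containing no
recurrent points of a bijective bimeasurable `f` (with `μ` finite Borel, inner regular on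
`B`), then for each `ε > 0` there is a measurable `K ⊆ B` with `μ(B∖K) < ε` which is a
finite union of `r` wandering sets, so that `∑_{n∈ℤ} μ(fⁿ(K)) ≤ r·μ(X) < ∞`. -/
theorem stmt_3 {X : Type*} [MetricSpace X] [MeasurableSpace X] [BorelSpace X]
    (μ : Measure X) (hfin : μ Set.univ ≠ ⊤) (f : X → X) (hbij : Function.Bijective f)
    (hmeas : Measurable f) (himg : ∀ B : Set X, MeasurableSet B → MeasurableSet (f '' B))
    (B : Set X) (hB : MeasurableSet B) (hBpos : 0 < μ B) (hBfin : μ B ≠ ⊤)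
    (hnorec : ∀ x ∈ B, ¬ Recurrent f x)
    (hreg : ∀ ε : ℝ≥0∞, 0 < ε →
      ∃ K : Set X, K ⊆ B ∧ IsCompact K ∧ MeasurableSet K ∧ μ (B \ K) < ε) :
    ∀ ε : ℝ≥0∞, 0 < ε → ∃ (K : Set X) (r : ℕ) (V : Fin r → Set X),
      K ⊆ B ∧ MeasurableSet K ∧ μ (B \ K) < ε ∧ K = ⋃ i, V i ∧
      (∀ i, Wandering f (V i)) ∧
      (∑' n : ℤ, μ (zimg f n K)) ≤ (r : ℝ≥0∞) * μ Set.univ ∧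
      (r : ℝ≥0∞) * μ Set.univ ≠ ⊤ := by
  intro ε hε
  obtain ⟨K₀, hK₀B, hK₀c, hK₀m, hK₀ε⟩ := hreg (ε / 2) (ENNReal.half_pos hε.ne')
  obtain ⟨D, hDcount, hDdense⟩ := hK₀c.isSeparable
  set A : ℕ → Set X := fun m => ⋂ k : ℕ, {x | 1 ≤ k → (1 : ℝ) / (m + 1) ≤ dist (f^[k] x) x}
    with hAdef
  have hAmem : ∀ m x, x ∈ A m ↔ ∀ k : ℕ, 1 ≤ k → (1 : ℝ) / (m + 1) ≤ dist (f^[k] x) x := by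
    intro m x
    simp only [hAdef, Set.mem_iInter, Set.mem_setOf_eq]
  -- measurability of K₀ ∩ {x | dist (f^[k] x) x < δ} via a countable dense subset of K₀
  have hDk : ∀ (k : ℕ) (δ : ℝ), 0 < δ →
      K₀ ∩ {x | dist (f^[k] x) x < δ} =
        ⋃ c ∈ D, ⋃ q : ℚ, if 0 < (q : ℝ) ∧ (q : ℝ) < δ then
          (K₀ ∩ Metric.ball c (q : ℝ) ∩ f^[k] ⁻¹' (Metric.ball c (δ - q))) else ∅ := by
    intro k δ hδ
    apply Set.Subset.antisymm
    · rintro x ⟨hxK, hxd⟩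
      simp only [Set.mem_setOf_eq] at hxd
      set d := dist (f^[k] x) x with hd
      set η := (δ - d) / 2 with hη
      have hηpos : 0 < η := by simp only [hη]; linarith
      have hxcl : x ∈ closure D := hDdense hxK
      obtain ⟨c, hcD, hxc⟩ := Metric.mem_closure_iff.mp hxcl η hηpos
      obtain ⟨q, hq1, hq2⟩ := exists_rat_btwn hxc
      have hq0 : 0 < (q : ℝ) := lt_of_le_of_lt dist_nonneg hq1
      refine Set.mem_biUnion hcD ?_
      refine Set.mem_iUnion.mpr ⟨q, ?_⟩
      have hd0 : (0 : ℝ) ≤ d := hd ▸ dist_nonneg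
      rw [if_pos ⟨hq0, by simp only [hη] at hq2; linarith⟩]
      refine ⟨⟨hxK, ?_⟩, ?_⟩
      · rw [Metric.mem_ball]; exact hq1
      · rw [Set.mem_preimage, Metric.mem_ball]
        calc dist (f^[k] x) c ≤ d + dist x c := dist_triangle _ _ _
          _ < d + (q : ℝ) := by linarith
          _ < δ - q := by simp only [hη] at hq2; linarith
    · intro x hx
      simp only [Set.mem_iUnion] at hx
      obtain ⟨c, hcD, q, hq⟩ := hx
      by_cases hcond : 0 < (q : ℝ) ∧ (q : ℝ) < δ
      · rw [if_pos hcond] at hq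
        obtain ⟨⟨hxK, hxb⟩, hxf⟩ := hq
        rw [Metric.mem_ball] at hxb
        rw [Set.mem_preimage, Metric.mem_ball] at hxf
        refine ⟨hxK, ?_⟩
        simp only [Set.mem_setOf_eq]
        calc dist (f^[k] x) x ≤ dist (f^[k] x) c + dist c x := dist_triangle _ _ _
          _ < (δ - q) + (q : ℝ) := by rw [dist_comm c x]; exact add_lt_add hxf hxb
          _ = δ := by ring
      · rw [if_neg hcond] at hq
        exact absurd hq (Set.notMem_empty x)
  have hA'meas : ∀ m, MeasurableSet (K₀ ∩ A m) := by
    intro m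
    have hδ : (0 : ℝ) < 1 / (m + 1) := by positivity
    have heq : K₀ ∩ A m = K₀ \ ⋃ k : ℕ, ⋃ (_ : 1 ≤ k),
        (K₀ ∩ {x | dist (f^[k] x) x < 1 / (m + 1)}) := by
      apply Set.Subset.antisymm
      · rintro x ⟨hxK, hxA⟩
        refine ⟨hxK, ?_⟩
        simp only [Set.mem_iUnion, not_exists]
        rintro k hk ⟨-, hxd⟩
        exact absurd ((hAmem m x).mp hxA k hk) (not_le.mpr hxd)
      · rintro x ⟨hxK, hxn⟩
        refine ⟨hxK, (hAmem m x).mpr ?_⟩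
        intro k hk
        by_contra hlt
        push_neg at hlt
        exact hxn (Set.mem_iUnion.mpr ⟨k, Set.mem_iUnion.mpr ⟨hk, hxK, hlt⟩⟩)
    rw [heq]
    apply hK₀m.diff
    apply MeasurableSet.iUnion
    intro k
    apply MeasurableSet.iUnion
    intro hk
    rw [hDk k _ hδ]
    apply MeasurableSet.biUnion hDcount
    intro c _
    apply MeasurableSet.iUnion
    intro q
    split
    · exact ((hK₀m.inter measurableSet_ball).inter ((hmeas.iterate k) measurableSet_ball))
    · exact MeasurableSet.empty
  have hAmono : Monotone A := by
    intro a b hab x hx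
    rw [hAmem] at hx ⊢
    intro k hk
    refine le_trans ?_ (hx k hk)
    apply one_div_le_one_div_of_le
    · positivity
    · exact add_le_add_left (Nat.cast_le.mpr hab) 1
  have hmem : ∀ x ∈ K₀, ∃ m, x ∈ A m := by
    intro x hx
    have hnr := hnorec x (hK₀B hx)
    rw [Recurrent] at hnr
    push_neg at hnr
    obtain ⟨U, hU, hxU, hUnot⟩ := hnr
    obtain ⟨ρ, hρpos, hball⟩ := Metric.mem_nhds_iff.mp (hU.mem_nhds hxU)
    obtain ⟨m, hm⟩ := exists_nat_one_div_lt hρpos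
    refine ⟨m, (hAmem m x).mpr ?_⟩
    intro k hk
    by_contra hlt
    push_neg at hlt
    have : f^[k] x ∈ Metric.ball x ρ := by
      rw [Metric.mem_ball]
      calc dist (f^[k] x) x < 1 / (m + 1) := hlt
        _ < ρ := by exact_mod_cast hm
    exact hUnot k hk (hball this)
  -- continuity from above
  set s : ℕ → Set X := fun m => K₀ \ (K₀ ∩ A m) with hsdef
  have hempty : ⋂ m, s m = ∅ := by
    apply Set.eq_empty_iff_forall_notMem.mpr
    intro x hx
    rw [Set.mem_iInter] at hx
    obtain ⟨m, hmA⟩ := hmem x (hx 0).1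
    exact (hx m).2 ⟨(hx m).1, hmA⟩
  have h0 : Tendsto (μ ∘ s) atTop (nhds 0) := by
    have h1 := tendsto_measure_iInter_atTop (μ := μ)
      (fun m => (hK₀m.diff (hA'meas m)).nullMeasurableSet)
      (fun a b hab => Set.diff_subset_diff_right (Set.inter_subset_inter_right _ (hAmono hab)))
      ⟨0, ((measure_mono (Set.subset_univ _)).trans_lt (lt_top_iff_ne_top.mpr hfin)).ne⟩
    rwa [hempty, measure_empty] at h1
  obtain ⟨m, hm⟩ := (h0.eventually_lt_const (ENNReal.half_pos hε.ne')).exists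
  set δ : ℝ := (1 : ℝ) / (m + 1) with hδdef
  have hδpos : 0 < δ := by positivity
  set K : Set X := K₀ ∩ A m with hKdef
  have hKmeas : MeasurableSet K := hA'meas m
  have hKB : K ⊆ B := fun x hx => hK₀B hx.1
  have hμBK : μ (B \ K) < ε := by
    have hsub : B \ K ⊆ (B \ K₀) ∪ s m := by
      rintro x ⟨hxB, hxK⟩
      by_cases h : x ∈ K₀
      · exact Or.inr ⟨h, hxK⟩
      · exact Or.inl ⟨hxB, h⟩
    calc μ (B \ K) ≤ μ ((B \ K₀) ∪ s m) := measure_mono hsub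
      _ ≤ μ (B \ K₀) + μ (s m) := measure_union_le _ _
      _ < ε / 2 + ε / 2 := ENNReal.add_lt_add hK₀ε hm
      _ = ε := ENNReal.add_halves ε
  -- finite subcover by small balls
  obtain ⟨t, ht⟩ := hK₀c.elim_finite_subcover (fun x : X => Metric.ball x (δ / 3))
    (fun x => Metric.isOpen_ball)
    (fun x _ => Set.mem_iUnion.mpr ⟨x, Metric.mem_ball_self (by positivity)⟩)
  set V : Fin t.card → Set X := fun i => K ∩ Metric.ball (↑(t.equivFin.symm i)) (δ / 3)
    with hVdef
  have hVmeas : ∀ i, MeasurableSet (V i) := fun i => hKmeas.inter measurableSet_ball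
  have hKeq : K = ⋃ i, V i := by
    apply Set.Subset.antisymm
    · intro x hx
      have hx0 : x ∈ ⋃ c ∈ t, Metric.ball c (δ / 3) := ht hx.1
      rw [Set.mem_iUnion₂] at hx0
      obtain ⟨c, hct, hc⟩ := hx0
      refine Set.mem_iUnion.mpr ⟨t.equivFin ⟨c, hct⟩, hx, ?_⟩
      simpa [Equiv.symm_apply_apply] using hc
    · exact Set.iUnion_subset fun i => Set.inter_subset_left
  have hwand : ∀ i, Wandering f (V i) := by
    intro i
    apply wandering_of_dist hbij (δ := δ)
    · intro x hx k hk
      exact (hAmem m x).mp hx.1.2 k hk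
    · intro y hy z hz
      have h1 := hy.2
      have h2 := hz.2
      rw [Metric.mem_ball] at h1 h2
      calc dist y z ≤ dist y (↑(t.equivFin.symm i)) + dist (↑(t.equivFin.symm i)) z :=
            dist_triangle _ _ _
        _ < δ / 3 + δ / 3 := by rw [dist_comm (↑(t.equivFin.symm i)) z]; exact add_lt_add h1 h2
        _ < δ := by linarith
  have hsum : ∀ i, (∑' n : ℤ, μ (zimg f n (V i))) ≤ μ Set.univ := by
    intro i
    rw [← measure_iUnion (hwand i) (fun n => zimg_measurable hmeas himg n (hVmeas i))]
    exact measure_mono (Set.subset_univ _)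
  refine ⟨K, t.card, V, hKB, hKmeas, hμBK, hKeq, hwand, ?_, ?_⟩
  · calc (∑' n : ℤ, μ (zimg f n K)) ≤ ∑' n : ℤ, ∑ i, μ (zimg f n (V i)) := by
          apply Summable.tsum_le_tsum _ ENNReal.summable ENNReal.summable
          intro n
          rw [hKeq, zimg_iUnion]
          exact measure_iUnion_fintype_le _ _
      _ = ∑ i, ∑' n : ℤ, μ (zimg f n (V i)) := Summable.tsum_finsetSum fun i _ => ENNReal.summable
      _ ≤ ∑ _i : Fin t.card, μ Set.univ := Finset.sum_le_sum fun i _ => hsum i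
      _ = (t.card : ℝ≥0∞) * μ Set.univ := by
          rw [Finset.sum_const, Finset.card_univ, Fintype.card_fin, nsmul_eq_mul]
  · exact ENNReal.mul_ne_top (ENNReal.natCast_ne_top _) hfin
end

section
/- Let (X, B, μ, f) be a dissipative measurable system, p ≥ 1, and suppose the composition operator T_f on L^p(X) has a dense set of periodic points. Then for every measurable B with μ(B) < ∞ and every ε > 0, there exists measurable B' ⊆ B and N ∈ ℕ, N ≥ 1, such that μ(B ∖ B') < ε, the sets f^{kN}(B'), k ∈ ℤ, are pairwise disjoint, and ∑_{k∈ℤ} μ(f^{kN}(B')) < ∞; consequently ∑_{n∈ℤ} μ(fⁿ(B')) < ∞, i.e., f satisfies Condition (SC). -/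
open MeasureTheory Set Filter
open scoped ENNReal NNReal

open scoped Topology

section Stmt17Aux


variable {X : Type*}

lemma zimg_eq {f : X → X} (hb : Function.Bijective f) (n : ℤ) (B : Set X) :
    zimg f n B = ⇑(Equiv.ofBijective f hb ^ n) '' B := by
  set g := Equiv.ofBijective f hb with hg
  rcases le_or_gt 0 n with h | h
  · rw [zimg, if_pos h]
    obtain ⟨k, rfl⟩ := Int.eq_ofNat_of_zero_le h
    rw [zpow_natCast, Equiv.Perm.coe_pow]
    simp only [Int.toNat_natCast]
    rfl
  · rw [zimg, if_neg (not_le.2 h)]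
    obtain ⟨k, rfl⟩ : ∃ k : ℕ, n = -(k : ℤ) := ⟨(-n).toNat, by omega⟩
    rw [zpow_neg, zpow_natCast]
    have h1 : ⇑((g ^ k)⁻¹) '' B = ⇑(g ^ k) ⁻¹' B := by
      rw [Equiv.Perm.inv_def, Equiv.image_eq_preimage_symm, Equiv.symm_symm]
    rw [h1, Equiv.Perm.coe_pow]
    simp only [neg_neg, Int.toNat_natCast]
    rfl

lemma zimg_add {f : X → X} (hb : Function.Bijective f) (m n : ℤ) (B : Set X) :
    zimg f (m + n) B = zimg f m (zimg f n B) := by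
  rw [zimg_eq hb, zimg_eq hb, zimg_eq hb, ← Set.image_comp]
  have h : ⇑(Equiv.ofBijective f hb ^ (m + n)) =
      ⇑(Equiv.ofBijective f hb ^ m) ∘ ⇑(Equiv.ofBijective f hb ^ n) := by
    funext x
    rw [Function.comp_apply, zpow_add, Equiv.Perm.mul_apply]
  rw [h]

lemma image_iterate_measurableSet [MeasurableSpace X] {f : X → X}
    (himg : ∀ B : Set X, MeasurableSet B → MeasurableSet (f '' B)) (k : ℕ)
    {B : Set X} (hB : MeasurableSet B) : MeasurableSet (f^[k] '' B) := by
  induction k with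
  | zero => simpa using hB
  | succ k ih => rw [Function.iterate_succ', Set.image_comp]; exact himg _ ih

lemma zimg_measurableSet [MeasurableSpace X] {f : X → X} (hf : Measurable f)
    (himg : ∀ B : Set X, MeasurableSet B → MeasurableSet (f '' B)) (n : ℤ)
    {B : Set X} (hB : MeasurableSet B) : MeasurableSet (zimg f n B) := by
  unfold zimg; split
  · exact image_iterate_measurableSet himg _ hB
  · exact (hf.iterate _) hB

lemma pow_fixed {E : Type*} [NormedAddCommGroup E] [NormedSpace ℝ E] (A : E →L[ℝ] E) (ψ : E)
    (h : A ψ = ψ) : ∀ m : ℕ, (A ^ m) ψ = ψ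
  | 0 => by simp
  | m + 1 => by rw [pow_succ, ContinuousLinearMap.mul_apply, h, pow_fixed A ψ h m]

lemma pow_apply_ae [MeasurableSpace X] {μ : Measure X} {f : X → X} {p : ℝ≥0∞} [Fact (1 ≤ p)]
    (T : Lp ℝ p μ →L[ℝ] Lp ℝ p μ)
    (hT : ∀ φ : Lp ℝ p μ, (T φ : X → ℝ) =ᵐ[μ] fun x => (φ : X → ℝ) (f x))
    (qf : Measure.QuasiMeasurePreserving f μ μ) :
    ∀ (n : ℕ) (φ : Lp ℝ p μ), ((T ^ n) φ : X → ℝ) =ᵐ[μ] fun x => (φ : X → ℝ) (f^[n] x) := by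
  intro n
  induction n with
  | zero => intro φ; simp only [pow_zero, ContinuousLinearMap.one_apply, Function.iterate_zero,
      id_eq]; exact Filter.EventuallyEq.rfl
  | succ n ih =>
    intro φ
    have h1 : (T ^ (n + 1)) φ = (T ^ n) (T φ) := by
      rw [pow_succ, ContinuousLinearMap.mul_apply]
    rw [h1]
    refine (ih (T φ)).trans ?_
    have h2 := (qf.iterate n).ae_eq (hT φ)
    filter_upwards [h2] with x hx
    simp only [Function.comp_apply] at hx
    rw [Function.iterate_succ_apply']
    exact hx

lemma ae_comp_zpow [MeasurableSpace X] {μ : Measure X} (g : Equiv.Perm X)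
    (hq : ∀ m : ℤ, Measure.QuasiMeasurePreserving ⇑(g ^ m) μ μ)
    (φ : X → ℝ) (N : ℤ) (hN : (fun x => φ ((g ^ N) x)) =ᵐ[μ] φ) :
    ∀ j : ℤ, (fun x => φ ((g ^ (j * N)) x)) =ᵐ[μ] φ := by
  have hbase : (fun x => φ ((g ^ (-N)) x)) =ᵐ[μ] φ := by
    have h1 := (hq (-N)).ae_eq hN
    have h2 : ((fun x => φ ((g ^ N) x)) ∘ ⇑(g ^ (-N))) =ᵐ[μ] (fun x => φ x) := by
      filter_upwards with x
      simp only [Function.comp_apply]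
      congr 1
      have : (g ^ N) ((g ^ (-N)) x) = (g ^ (N + -N)) x := by
        rw [zpow_add, Equiv.Perm.mul_apply]
      rw [this]; simp
    exact (h2.symm.trans h1).symm
  have key : ∀ m : ℤ, ((fun x => φ ((g ^ m) x)) =ᵐ[μ] φ) →
      ((fun x => φ ((g ^ (m + N)) x)) =ᵐ[μ] φ) ∧ ((fun x => φ ((g ^ (m - N)) x)) =ᵐ[μ] φ) := by
    intro m hm
    constructor
    · have h1 := (hq N).ae_eq hm
      filter_upwards [h1, hN] with x hx1 hx2
      simp only [Function.comp_apply] at hx1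
      have : (g ^ (m + N)) x = (g ^ m) ((g ^ N) x) := by
        rw [zpow_add, Equiv.Perm.mul_apply]
      rw [this, hx1]; exact hx2
    · have h1 := (hq (-N)).ae_eq hm
      filter_upwards [h1, hbase] with x hx1 hx2
      simp only [Function.comp_apply] at hx1
      have : (g ^ (m - N)) x = (g ^ m) ((g ^ (-N)) x) := by
        rw [sub_eq_add_neg, zpow_add, Equiv.Perm.mul_apply]
      rw [this, hx1]; exact hx2
  intro j
  induction j using Int.induction_on with
  | zero => simp only [zero_mul, zpow_zero, Equiv.Perm.coe_one, id_eq]; exact Filter.EventuallyEq.rfl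
  | succ i ih =>
    have := (key (i * N) ih).1
    rwa [show (i : ℤ) * N + N = ((i : ℤ) + 1) * N by ring] at this
  | pred i ih =>
    have := (key (-(i : ℤ) * N) ih).2
    rwa [show (-(i : ℤ)) * N - N = (-(i : ℤ) - 1) * N by ring] at this

end Stmt17Aux

/-- In a dissipative measurable system whose composition operator `T_f` on
`L^p(X)` has a dense set of periodic points, for every measurable `B` of finite measure
and every `ε > 0` there are `B' ⊆ B` measurable and `N ≥ 1` with `μ(B∖B') < ε`, the sets
`f^{kN}(B')`, `k ∈ ℤ`, pairwise disjoint, `∑_{k∈ℤ} μ(f^{kN}(B')) < ∞` and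
`∑_{n∈ℤ} μ(fⁿ(B')) < ∞`; consequently `f` satisfies Condition (SC). -/
theorem stmt_17 {X : Type*} [MeasurableSpace X] (μ : Measure X) (f : X → X) (c : ℝ≥0∞)
    (hsys : MeasSystem μ f c) (hdiss : Dissipative f)
    (p : ℝ≥0∞) [Fact (1 ≤ p)] (hp : p ≠ ⊤)
    (T : Lp ℝ p μ →L[ℝ] Lp ℝ p μ)
    (hT : ∀ φ : Lp ℝ p μ, (T φ : X → ℝ) =ᵐ[μ] fun x => (φ : X → ℝ) (f x))
    (hdense : Dense {φ : Lp ℝ p μ | ∃ N : ℕ, 1 ≤ N ∧ (T ^ N) φ = φ}) :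
    (∀ B : Set X, MeasurableSet B → μ B ≠ ⊤ → ∀ ε : ℝ≥0∞, 0 < ε →
      ∃ (B' : Set X) (N : ℕ), B' ⊆ B ∧ MeasurableSet B' ∧ 1 ≤ N ∧ μ (B \ B') < ε ∧
        (Pairwise fun k l : ℤ =>
          Disjoint (zimg f (k * (N : ℤ)) B') (zimg f (l * (N : ℤ)) B')) ∧
        (∑' k : ℤ, μ (zimg f (k * (N : ℤ)) B')) ≠ ⊤ ∧
        (∑' n : ℤ, μ (zimg f n B')) ≠ ⊤) ∧
    SCcond μ f := by
  obtain ⟨hσ, hμpos, hbij, hmf, himg, hns, hc0, hcT, hbd⟩ := hsys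
  obtain ⟨W, hWm, hWw, hWg⟩ := hdiss
  set g : Equiv.Perm X := Equiv.ofBijective f hbij with hgdef
  -- quasi measure preserving facts
  have qf : Measure.QuasiMeasurePreserving f μ μ := by
    refine ⟨hmf, Measure.AbsolutelyContinuous.mk fun s hs h0 => ?_⟩
    rw [Measure.map_apply hmf hs]
    exact (hns s hs).2 h0
  have hgsymm_meas : Measurable ⇑g.symm := by
    intro t ht
    rw [← Equiv.image_eq_preimage_symm]
    exact himg t ht
  have qfs : Measure.QuasiMeasurePreserving ⇑g.symm μ μ := by
    refine ⟨hgsymm_meas, Measure.AbsolutelyContinuous.mk fun s hs h0 => ?_⟩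
    rw [Measure.map_apply hgsymm_meas hs, ← Equiv.image_eq_preimage_symm]
    refine (hns _ (himg s hs)).1 ?_
    show μ (f ⁻¹' (f '' s)) = 0
    rwa [Set.preimage_image_eq s hbij.injective]
  have qz : ∀ m : ℤ, Measure.QuasiMeasurePreserving ⇑(g ^ m) μ μ := by
    intro m
    rcases le_or_gt 0 m with h | h
    · obtain ⟨k, rfl⟩ := Int.eq_ofNat_of_zero_le h
      have : ⇑(g ^ (k : ℤ)) = f^[k] := by rw [zpow_natCast]; rfl
      rw [this]
      exact qf.iterate k
    · obtain ⟨k, rfl⟩ : ∃ k : ℕ, m = -(k : ℤ) := ⟨(-m).toNat, by omega⟩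
      have : ⇑(g ^ (-(k : ℤ))) = (⇑g.symm)^[k] := by
        rw [zpow_neg, zpow_natCast, ← inv_pow, Equiv.Perm.coe_pow]
        rfl
      rw [this]
      exact qfs.iterate k
  -- levels
  set L : ℤ → Set X := fun n => zimg f n W with hLdef
  have hLm : ∀ n : ℤ, MeasurableSet (L n) := fun n => zimg_measurableSet hmf himg n hWm
  have hcover : (⋃ n : ℤ, L n) = Set.univ := hWg
  -- main part
  have main : ∀ B : Set X, MeasurableSet B → μ B ≠ ⊤ → ∀ ε : ℝ≥0∞, 0 < ε →
      ∃ (B' : Set X) (N : ℕ), B' ⊆ B ∧ MeasurableSet B' ∧ 1 ≤ N ∧ μ (B \ B') < ε ∧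
        (Pairwise fun k l : ℤ =>
          Disjoint (zimg f (k * (N : ℤ)) B') (zimg f (l * (N : ℤ)) B')) ∧
        (∑' k : ℤ, μ (zimg f (k * (N : ℤ)) B')) ≠ ⊤ ∧
        (∑' n : ℤ, μ (zimg f n B')) ≠ ⊤ := by
    intro B hB hBfin ε hε
    have hp0 : p ≠ 0 := by
      have h1 : (1 : ℝ≥0∞) ≤ p := Fact.out
      intro h; rw [h] at h1; exact absurd h1 (by norm_num)
    have hε2 : (0 : ℝ≥0∞) < ε / 2 := ENNReal.half_pos hε.ne'
    -- approximation by periodic elements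
    set χ : Lp ℝ p μ := indicatorConstLp p hB hBfin (1 : ℝ) with hχdef
    have hseq : ∀ j : ℕ, ∃ φ : Lp ℝ p μ,
        (∃ N : ℕ, 1 ≤ N ∧ (T ^ N) φ = φ) ∧ dist χ φ < 1 / (j + 1) := by
      intro j
      obtain ⟨y, hy, hdy⟩ := hdense.exists_dist_lt χ (by positivity : (0:ℝ) < 1 / (j + 1))
      exact ⟨y, hy, hdy⟩
    choose φseq hφper hφdist using hseq
    have htend : Tendsto (fun j => eLpNorm (⇑(φseq j) - ⇑χ) p μ) atTop (𝓝 0) := by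
      have hble : ∀ j : ℕ, eLpNorm (⇑(φseq j) - ⇑χ) p μ ≤ ENNReal.ofReal (1 / (j + 1)) := by
        intro j
        rw [eLpNorm_congr_ae (Lp.coeFn_sub (φseq j) χ).symm]
        have h2 : eLpNorm (⇑(φseq j - χ)) p μ = ENNReal.ofReal ‖φseq j - χ‖ := by
          rw [Lp.norm_def, ENNReal.ofReal_toReal (Lp.eLpNorm_ne_top _)]
        rw [h2]
        apply ENNReal.ofReal_le_ofReal
        rw [← dist_eq_norm, dist_comm]
        exact (hφdist j).le
      refine tendsto_of_tendsto_of_tendsto_of_le_of_le tendsto_const_nhds ?_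
        (fun j => zero_le) hble
      have h3 : Tendsto (fun j : ℕ => (1 : ℝ) / (j + 1)) atTop (𝓝 0) :=
        tendsto_one_div_add_atTop_nhds_zero_nat
      have h4 := ENNReal.tendsto_ofReal h3
      simpa using h4
    have htm : TendstoInMeasure μ (fun j => ⇑(φseq j)) atTop ⇑χ :=
      tendstoInMeasure_of_tendsto_eLpNorm_of_ne_top hp0 hp
        (fun j => Lp.aestronglyMeasurable _) (Lp.aestronglyMeasurable _) htend
    obtain ⟨j, hj⟩ := ((htm (1/2) (by norm_num)).eventually_lt_const hε2).exists
    set φ : Lp ℝ p μ := φseq j with hφdef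
    set φc : X → ℝ := ⇑φ with hφcdef
    have hφm : Measurable φc := (Lp.stronglyMeasurable φ).measurable
    -- the superlevel set E
    set E : Set X := {x | (1/2 : ℝ) ≤ |φc x|} with hEdef
    have hE : MeasurableSet E :=
      measurableSet_le measurable_const (continuous_abs.measurable.comp hφm)
    have hEfin : μ E < ⊤ := by
      have h1 := (Lp.memLp φ).meas_ge_lt_top hp0 hp (ε := (1/2 : ℝ≥0)) (by norm_num)
      refine lt_of_le_of_lt (measure_mono ?_) h1
      intro x hx
      simp only [Set.mem_setOf_eq] at hx ⊢
      rw [← NNReal.coe_le_coe, coe_nnnorm, Real.norm_eq_abs]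
      have hx' : (1/2 : ℝ) ≤ |φc x| := hx
      push_cast
      linarith
    -- finitely many levels capture most of B
    have hsum' : (∑' n : ℤ, μ (B ∩ L n)) ≠ ⊤ := by
      have h1 : Pairwise (Function.onFun Disjoint fun n : ℤ => B ∩ L n) := fun m n h =>
        ((hWw h).mono Set.inter_subset_right Set.inter_subset_right)
      have h2 := measure_iUnion (μ := μ) h1 fun n => hB.inter (hLm n)
      have h3 : (⋃ n : ℤ, B ∩ L n) = B := by
        rw [← Set.inter_iUnion, hcover, Set.inter_univ]
      rw [h3] at h2
      rw [← h2]
      exact hBfin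
    obtain ⟨s, hs⟩ : ∃ s : Finset ℤ, (∑' n : {n : ℤ // n ∉ s}, μ (B ∩ L n)) < ε / 2 :=
      ((ENNReal.tendsto_tsum_compl_atTop_zero hsum').eventually_lt_const hε2).exists
    set U : Set X := ⋃ n ∈ s, L n with hUdef
    have hUm : MeasurableSet U := MeasurableSet.biUnion s.countable_toSet fun n _ => hLm n
    have hBU : μ (B \ U) < ε / 2 := by
      refine lt_of_le_of_lt ?_ hs
      have hsub : B \ U ⊆ ⋃ n : {n : ℤ // n ∉ s}, (B ∩ L n) := by
        intro x hx
        have hx1 : x ∈ ⋃ n : ℤ, L n := by rw [hcover]; trivial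
        obtain ⟨n, hn⟩ := Set.mem_iUnion.mp hx1
        have hns' : n ∉ s := fun h => hx.2 (Set.mem_biUnion h hn)
        exact Set.mem_iUnion.mpr ⟨⟨n, hns'⟩, ⟨hx.1, hn⟩⟩
      exact (measure_mono hsub).trans (measure_iUnion_le _)
    -- the set B'
    set B' : Set X := (B ∩ U) ∩ {x | |φc x - 1| < 1/2} with hB'def
    have hB'm : MeasurableSet B' := (hB.inter hUm).inter
      (measurableSet_lt (continuous_abs.measurable.comp (hφm.sub measurable_const))
        measurable_const)
    have hB'B : B' ⊆ B := fun x hx => hx.1.1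
    have hB'U : B' ⊆ U := fun x hx => hx.1.2
    have hB'E : B' ⊆ E := by
      rintro x ⟨-, hx2⟩
      simp only [Set.mem_setOf_eq] at hx2
      have h := abs_sub_lt_iff.mp hx2
      show (1/2 : ℝ) ≤ |φc x|
      have h5 : (1/2 : ℝ) ≤ φc x := by linarith [h.2]
      exact h5.trans (le_abs_self _)
    -- measure of B \ B'
    have hBB' : μ (B \ B') < ε := by
      have hsplit : B \ B' ⊆ (B \ U) ∪ (B ∩ {x | (1/2 : ℝ) ≤ |φc x - 1|}) := by
        intro x hx
        by_cases hxU : x ∈ U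
        · right
          refine ⟨hx.1, ?_⟩
          have h6 := hx.2
          simp only [hB'def, Set.mem_inter_iff, Set.mem_setOf_eq, not_and, not_lt] at h6
          exact h6 ⟨hx.1, hxU⟩
        · exact Or.inl ⟨hx.1, hxU⟩
      have hae : μ (B ∩ {x | (1/2 : ℝ) ≤ |φc x - 1|}) ≤
          μ {x | (1/2 : ℝ) ≤ dist (φc x) (⇑χ x)} := by
        apply measure_mono_ae
        filter_upwards [indicatorConstLp_coeFn_mem (p := p) (hs := hB) (hμs := hBfin)
          (c := (1 : ℝ))] with x hx hmem
        obtain ⟨h1, h2⟩ := hmem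
        show (1/2 : ℝ) ≤ dist (φc x) (⇑χ x)
        rw [hx h1, Real.dist_eq]
        exact h2
      calc μ (B \ B') ≤ μ ((B \ U) ∪ (B ∩ {x | (1/2 : ℝ) ≤ |φc x - 1|})) :=
            measure_mono hsplit
        _ ≤ μ (B \ U) + μ (B ∩ {x | (1/2 : ℝ) ≤ |φc x - 1|}) := measure_union_le _ _
        _ ≤ μ (B \ U) + μ {x | (1/2 : ℝ) ≤ dist (φc x) (⇑χ x)} := add_le_add le_rfl hae
        _ < ε / 2 + ε / 2 := ENNReal.add_lt_add hBU (lt_of_le_of_lt (measure_mono fun x hx => by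
            simp only [Set.mem_setOf_eq] at hx ⊢
            rw [edist_dist]
            calc (1 : ℝ≥0∞) / 2 = ENNReal.ofReal (1 / 2) := by
                  rw [ENNReal.ofReal_div_of_pos two_pos, ENNReal.ofReal_one, ENNReal.ofReal_ofNat]
              _ ≤ _ := ENNReal.ofReal_le_ofReal hx) hj)
        _ = ε := ENNReal.add_halves ε
    -- periodicity and the choice of N
    obtain ⟨N₀, hN₀, hTper⟩ := hφper j
    set D : ℕ := 2 * s.sup (fun n => n.natAbs) + 1 with hDdef
    set N : ℕ := N₀ * D with hNdef
    have hN1 : 1 ≤ N := Nat.one_le_iff_ne_zero.mpr (by positivity)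
    have hDN : D ≤ N := Nat.le_mul_of_pos_left D hN₀
    have hTN : (T ^ N) φ = φ := by rw [hNdef, pow_mul]; exact pow_fixed _ _ hTper D
    -- a.e. invariance of φ under g ^ (j * N)
    have hgN : ⇑(g ^ ((N : ℕ) : ℤ)) = f^[N] := by rw [zpow_natCast]; rfl
    have hφiter : φc =ᵐ[μ] fun x => φc (f^[N] x) := by
      have h7 := pow_apply_ae T hT qf N φ
      rw [hTN] at h7
      exact h7
    have hbase : (fun x => φc ((g ^ ((N : ℕ) : ℤ)) x)) =ᵐ[μ] φc := by
      rw [hgN]; exact hφiter.symm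
    have hφz := ae_comp_zpow g qz φc ((N : ℕ) : ℤ) hbase
    -- membership of images in levels
    have hmem : ∀ (m : ℤ) (x : X), x ∈ zimg f m B' → ∃ n ∈ s, x ∈ L (m + n) := by
      intro m x hx
      rw [zimg_eq hbij] at hx
      obtain ⟨y, hy, rfl⟩ := hx
      obtain ⟨n, hn, hyL⟩ := Set.mem_iUnion₂.mp (hB'U hy)
      refine ⟨n, hn, ?_⟩
      rw [hLdef]
      show _ ∈ zimg f (m + n) W
      rw [zimg_add hbij m n W, zimg_eq hbij m]
      exact ⟨y, hyL, rfl⟩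
    -- pairwise disjointness
    have hdisj : Pairwise fun k l : ℤ =>
        Disjoint (zimg f (k * (N : ℤ)) B') (zimg f (l * (N : ℤ)) B') := by
      intro k l hkl
      rw [Set.disjoint_left]
      intro x hxk hxl
      obtain ⟨n, hn, hxn⟩ := hmem _ x hxk
      obtain ⟨n', hn', hxn'⟩ := hmem _ x hxl
      have heq : k * (N : ℤ) + n = l * (N : ℤ) + n' := by
        by_contra hne
        exact Set.disjoint_left.mp (hWw hne) hxn hxn'
      have h4 : (k - l) * (N : ℤ) = n' - n := by linear_combination heq
      have h5 : ((k - l) * (N : ℤ)).natAbs = (k - l).natAbs * N := by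
        rw [Int.natAbs_mul]; simp
      have h6 : 1 ≤ (k - l).natAbs := Int.natAbs_pos.mpr (sub_ne_zero.mpr hkl)
      have h7 : (n' - n).natAbs ≤ n'.natAbs + n.natAbs := Int.natAbs_sub_le n' n
      have h8 : n.natAbs ≤ s.sup (fun n => n.natAbs) := Finset.le_sup hn
      have h9 : n'.natAbs ≤ s.sup (fun n => n.natAbs) := Finset.le_sup hn'
      have h10 : N ≤ (k - l).natAbs * N := Nat.le_mul_of_pos_left N h6
      rw [h4] at h5
      omega
    -- measurability of the pieces
    have hAm : ∀ m : ℤ, MeasurableSet (zimg f m B') := fun m =>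
      zimg_measurableSet hmf himg m hB'm
    -- each piece is a.e. inside E
    have zimg_pre : ∀ (m : ℤ) (A : Set X), zimg f m A = ⇑(g ^ (-m)) ⁻¹' A := by
      intro m A
      rw [zimg_eq hbij, Equiv.image_eq_preimage_symm]
      have : (g ^ m).symm = g ^ (-m) := by rw [← Equiv.Perm.inv_def, zpow_neg]
      rw [this]
    have hAE : ∀ k : ℤ, μ (zimg f (k * (N : ℤ)) B' \ E) = 0 := by
      intro k
      have h1 : zimg f (k * (N : ℤ)) B' ⊆ zimg f (k * (N : ℤ)) E := by
        rw [zimg_eq hbij, zimg_eq hbij]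
        exact Set.image_mono hB'E
      have h3 := hφz (-k)
      rw [show (-k) * ((N : ℕ) : ℤ) = -(k * (N : ℤ)) by ring] at h3
      have h4 : zimg f (k * (N : ℤ)) E =ᵐ[μ] E := by
        rw [zimg_pre]
        filter_upwards [h3] with x hx
        show ((1/2 : ℝ) ≤ |φc ((g ^ (-(k * (N : ℤ)))) x)|) = ((1/2 : ℝ) ≤ |φc x|)
        rw [hx]
      have h5 : μ (zimg f (k * (N : ℤ)) E \ E) = 0 := (ae_eq_set.mp h4).1
      exact measure_mono_null (Set.diff_subset_diff_left h1) h5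
    -- summability over multiples of N
    have hSsum : (∑' k : ℤ, μ (zimg f (k * (N : ℤ)) B')) ≠ ⊤ := by
      have hAk : ∀ k : ℤ, μ (zimg f (k * (N : ℤ)) B') = μ (zimg f (k * (N : ℤ)) B' ∩ E) := by
        intro k
        have h1 := measure_inter_add_diff (μ := μ) (zimg f (k * (N : ℤ)) B') hE
        rw [← h1, hAE, add_zero]
      rw [tsum_congr hAk]
      have hd2 : Pairwise (Function.onFun Disjoint fun k : ℤ => zimg f (k * (N : ℤ)) B' ∩ E) :=
        fun k l hkl => ((hdisj hkl).mono Set.inter_subset_left Set.inter_subset_left)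
      rw [← measure_iUnion hd2 fun k => (hAm _).inter hE]
      exact ((measure_mono (Set.iUnion_subset fun k => Set.inter_subset_right)).trans_lt
        hEfin).ne
    -- summability of the full sum
    have hbound : ∀ (m : ℤ) (r : ℕ), μ (zimg f (m - r) B') ≤ c ^ r * μ (zimg f m B') := by
      intro m r
      induction r with
      | zero => simp
      | succ r ih =>
        have h1 : zimg f (m - ((r : ℤ) + 1)) B' = f ⁻¹' (zimg f (m - r) B') := by
          have h2 := zimg_add hbij (-1) (m - r) B'
          rw [show (-1 : ℤ) + (m - r) = m - ((r : ℤ) + 1) by ring] at h2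
          rw [h2]
          rw [zimg, if_neg (by norm_num)]
          norm_num
        have h3 : μ (zimg f (m - ((r : ℤ) + 1)) B') ≤ c * μ (zimg f (m - r) B') := by
          rw [h1]; exact hbd _ (hAm _)
        calc μ (zimg f (m - ((r : ℕ) + 1 : ℕ)) B')
            = μ (zimg f (m - ((r : ℤ) + 1)) B') := by norm_num
          _ ≤ c * μ (zimg f (m - r) B') := h3
          _ ≤ c * (c ^ r * μ (zimg f m B')) := mul_le_mul_right ih c
          _ = c ^ (r + 1) * μ (zimg f m B') := by ring
    haveI : NeZero N := ⟨by omega⟩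
    set M : ℝ≥0∞ := (max 1 c) ^ N with hMdef
    have hMne : M ≠ ⊤ := by
      apply ENNReal.pow_ne_top
      simp [hcT]
    have key : ∀ (k : ℤ) (r : Fin N),
        μ (zimg f (k * (N : ℤ) + (r : ℕ)) B') ≤ M * μ (zimg f ((k + 1) * (N : ℤ)) B') := by
      intro k r
      have h0 : k * (N : ℤ) + ((r : ℕ) : ℤ) = (k + 1) * (N : ℤ) - ((N - (r : ℕ) : ℕ) : ℤ) := by
        have := r.2
        push_cast [Nat.cast_sub (le_of_lt r.2)]
        ring
      rw [h0]
      refine (hbound _ _).trans ?_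
      refine mul_le_mul_left ?_ _
      calc c ^ (N - (r : ℕ)) ≤ (max 1 c) ^ (N - (r : ℕ)) :=
            pow_le_pow_left' (le_max_right 1 c) _
        _ ≤ (max 1 c) ^ N := pow_le_pow_right' (le_max_left 1 c) (Nat.sub_le _ _)
    have hful : (∑' n : ℤ, μ (zimg f n B')) ≠ ⊤ := by
      have e1 : (∑' n : ℤ, μ (zimg f n B')) =
          ∑' q : ℤ × Fin N, μ (zimg f (q.1 * (N : ℤ) + ((q.2 : ℕ) : ℤ)) B') := by
        rw [← (Int.divModEquiv N).symm.tsum_eq (fun n => μ (zimg f n B'))]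
        refine tsum_congr fun q => ?_
        have hq : ((Int.divModEquiv N).symm q : ℤ) = q.1 * (N : ℤ) + ((q.2 : ℕ) : ℤ) := by
          simp [Int.divModEquiv]
        rw [hq]
      have e1' := ENNReal.tsum_prod
        (f := fun (a : ℤ) (b : Fin N) => μ (zimg f (a * (N : ℤ) + ((b : ℕ) : ℤ)) B'))
      rw [e1, e1']
      have e2 : ∀ k : ℤ, (∑' r : Fin N, μ (zimg f (k * (N : ℤ) + ((r : ℕ) : ℤ)) B')) ≤
          (N : ℝ≥0∞) * (M * μ (zimg f ((k + 1) * (N : ℤ)) B')) := by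
        intro k
        calc (∑' r : Fin N, μ (zimg f (k * (N : ℤ) + ((r : ℕ) : ℤ)) B'))
            ≤ ∑' _r : Fin N, M * μ (zimg f ((k + 1) * (N : ℤ)) B') :=
              ENNReal.tsum_le_tsum fun r => key k r
          _ = (N : ℝ≥0∞) * (M * μ (zimg f ((k + 1) * (N : ℤ)) B')) := by
              rw [tsum_fintype]
              simp [Finset.sum_const, nsmul_eq_mul]
      have e3 : (∑' k : ℤ, (N : ℝ≥0∞) * (M * μ (zimg f ((k + 1) * (N : ℤ)) B'))) =
          (N : ℝ≥0∞) * (M * ∑' k : ℤ, μ (zimg f ((k + 1) * (N : ℤ)) B')) := by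
        rw [ENNReal.tsum_mul_left, ENNReal.tsum_mul_left]
      have e4 : (∑' k : ℤ, μ (zimg f ((k + 1) * (N : ℤ)) B')) =
          ∑' k : ℤ, μ (zimg f (k * (N : ℤ)) B') := by
        have := (Equiv.addRight (1 : ℤ)).tsum_eq (fun k : ℤ => μ (zimg f (k * (N : ℤ)) B'))
        simpa using this
      refine ne_top_of_le_ne_top ?_ ((ENNReal.tsum_le_tsum e2).trans e3.le)
      rw [e4]
      exact ENNReal.mul_ne_top (ENNReal.natCast_ne_top N)
        (ENNReal.mul_ne_top hMne hSsum)
    exact ⟨B', N, hB'B, hB'm, hN1, hBB', hdisj, hSsum, hful⟩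
  refine ⟨main, ?_⟩
  intro ε hε B hB hBfin
  obtain ⟨B', N, h1, h2, _h3, h4, _h5, _h6, h7⟩ := main B hB hBfin.ne ε hε
  exact ⟨B', h1, h2, h4, h7⟩
end
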